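/- Suppose f − 1 = λm and let χ be a multiplicative character of order m on F_q. Then H_{q,m} is a (q, f, λ)-difference set in F_q if and only if Σ_{α ∈ H_{q,m}} χ^s(1 − α) = 0 for every s = 1, ..., m − 1. -/

import Mathlib

/-- `D` is a `(q, k, l)`-difference set in the additive group `F` (with `q = |F|`):
`|D| = k` and each nonzero `a` has exactly `l` ordered pairs `(x, y) ∈ D × D` with
`x - y = a`. -/
def IsDiffSet {F : Type*} [AddGroup F] (D : Set F) (k l : ℕ) : Prop :=
  D.ncard = k ∧
    ∀ a : F, a ≠ 0 → {x : F × F | x.1 ∈ D ∧ x.2 ∈ D ∧ x.1 - x.2 = a}.ncard = l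

/-- The set of nonzero `m`-th powers in `F`. -/
def Hset (F : Type*) [Field F] (m : ℕ) : Set F :=
  {x : F | x ≠ 0 ∧ ∃ y : F, y ^ m = x}

section Aux

variable {F : Type*} [Field F] [Fintype F] {m : ℕ}

lemma mul_mem_Hset {a b : F} (ha : a ∈ Hset F m) (hb : b ∈ Hset F m) :
    a * b ∈ Hset F m := by
  obtain ⟨ha0, y, hy⟩ := ha
  obtain ⟨hb0, z, hz⟩ := hb
  exact ⟨mul_ne_zero ha0 hb0, y * z, by rw [mul_pow, hy, hz]⟩

lemma inv_mem_Hset {a : F} (ha : a ∈ Hset F m) : a⁻¹ ∈ Hset F m := by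
  obtain ⟨ha0, y, hy⟩ := ha
  exact ⟨inv_ne_zero ha0, y⁻¹, by rw [inv_pow, hy]⟩

lemma chi_one_on_Hset (hm : 0 < m) (χ : MulChar F ℂ) (hχ : orderOf χ = m) {a : F}
    (ha : a ∈ Hset F m) : χ a = 1 := by
  obtain ⟨ha0, y, hy⟩ := ha
  have hy0 : y ≠ 0 := by
    rintro rfl
    rw [zero_pow hm.ne'] at hy
    exact ha0 hy.symm
  have hχm : χ ^ m = 1 := by rw [← hχ]; exact pow_orderOf_eq_one χ
  rw [← hy, map_pow, ← MulChar.pow_apply' χ hm.ne', hχm,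
    MulChar.one_apply (isUnit_iff_ne_zero.mpr hy0)]

lemma chi_pow_apply (χ : MulChar F ℂ) (s : ℕ) {x : F} (hx : x ≠ 0) :
    (χ ^ s) x = (χ x) ^ s := by
  cases s with
  | zero => rw [pow_zero, pow_zero, MulChar.one_apply (isUnit_iff_ne_zero.mpr hx)]
  | succ n => rw [MulChar.pow_apply' χ (Nat.succ_ne_zero n)]

lemma chi_pow_on_Hset (hm : 0 < m) (χ : MulChar F ℂ) (hχ : orderOf χ = m) (s : ℕ) {a : F}
    (ha : a ∈ Hset F m) : (χ ^ s) a = 1 := by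
  rw [chi_pow_apply χ s ha.1, chi_one_on_Hset hm χ hχ ha, one_pow]

lemma mem_Hset_iff (hm : 0 < m) (χ : MulChar F ℂ) (hχ : orderOf χ = m) {x : F} (hx : x ≠ 0) :
    x ∈ Hset F m ↔ χ x = 1 := by
  constructor
  · exact fun h => chi_one_on_Hset hm χ hχ h
  · intro h1
    obtain ⟨g, hg⟩ := IsCyclic.exists_generator (α := Fˣ)
    have hgk : ∀ u : Fˣ, ∃ k : ℕ, g ^ k = u := fun u =>
      (Submonoid.mem_powers_iff u g).mp (mem_powers_iff_mem_zpowers.mpr (hg u))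
    have hdvd : ∀ d : ℕ, (χ (g : F)) ^ d = 1 → m ∣ d := by
      intro d hd
      have hone : χ ^ d = 1 := by
        apply MulChar.ext
        intro u
        obtain ⟨k, hk⟩ := hgk u
        rw [MulChar.pow_apply_coe, MulChar.one_apply_coe, ← hk, Units.val_pow_eq_pow_val,
          map_pow, ← pow_mul, mul_comm, pow_mul, hd, one_pow]
      rw [← hχ]
      exact orderOf_dvd_of_pow_eq_one hone
    obtain ⟨k, hk⟩ := hgk (Units.mk0 x hx)
    have hx' : x = (g : F) ^ k := by
      rw [← Units.val_pow_eq_pow_val, hk, Units.val_mk0]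
    have h2 : (χ (g : F)) ^ k = 1 := by rw [← map_pow, ← hx', h1]
    have hzm : (χ (g : F)) ^ m = 1 := by
      have hχm : χ ^ m = 1 := by rw [← hχ]; exact pow_orderOf_eq_one χ
      rw [← MulChar.pow_apply' χ hm.ne', hχm, MulChar.one_apply (Units.isUnit g)]
    have hord : orderOf (χ (g : F)) = m :=
      Nat.dvd_antisymm (orderOf_dvd_of_pow_eq_one hzm) (hdvd _ (pow_orderOf_eq_one _))
    have hmk : m ∣ k := hord ▸ orderOf_dvd_of_pow_eq_one h2
    obtain ⟨j, rfl⟩ := hmk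
    exact ⟨hx, (g : F) ^ j, by rw [← pow_mul, mul_comm, hx']⟩

lemma Hfin_card {f : ℕ} (hm : 0 < m) (hf : 0 < f) (hcard : Fintype.card F = m * f + 1) :
    (Set.toFinite (Hset F m)).toFinset.card = f := by
  classical
  obtain ⟨g, hg⟩ := IsCyclic.exists_generator (α := Fˣ)
  have hog : orderOf g = m * f := by
    rw [orderOf_eq_card_of_forall_mem_zpowers hg, Nat.card_eq_fintype_card, Fintype.card_units, hcard,
      Nat.add_sub_cancel]
  have hgk : ∀ u : Fˣ, ∃ k : ℕ, g ^ k = u := fun u =>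
    (Submonoid.mem_powers_iff u g).mp (mem_powers_iff_mem_zpowers.mpr (hg u))
  have himg : (Set.toFinite (Hset F m)).toFinset
      = (Finset.range f).image (fun j => ((g : F) ^ (m * j))) := by
    ext x
    simp only [Set.Finite.mem_toFinset, Finset.mem_image, Finset.mem_range]
    constructor
    · rintro ⟨hx0, y, rfl⟩
      have hy0 : y ≠ 0 := by
        rintro rfl
        rw [zero_pow hm.ne'] at hx0
        exact hx0 rfl
      obtain ⟨k, hk⟩ := hgk (Units.mk0 y hy0)
      have hy' : y = (g : F) ^ k := by
        rw [← Units.val_pow_eq_pow_val, hk, Units.val_mk0]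
      refine ⟨k % f, Nat.mod_lt _ hf, ?_⟩
      have hu : g ^ (m * (k % f)) = g ^ (m * k) := by
        rw [pow_eq_pow_iff_modEq, hog]
        exact (Nat.mod_modEq k f).mul_left' m
      have hv := congrArg (Units.val) hu
      rw [Units.val_pow_eq_pow_val, Units.val_pow_eq_pow_val] at hv
      rw [hv, hy', ← pow_mul, mul_comm]
    · rintro ⟨j, hj, rfl⟩
      exact ⟨pow_ne_zero _ (Units.ne_zero g), (g : F) ^ j, by rw [← pow_mul, mul_comm]⟩
  rw [himg, Finset.card_image_of_injOn, Finset.card_range]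
  intro i hi j hj hij
  simp only [Finset.coe_range, Set.mem_Iio] at hi hj
  have hu : g ^ (m * i) = g ^ (m * j) := by
    apply Units.ext
    rw [Units.val_pow_eq_pow_val, Units.val_pow_eq_pow_val]
    exact hij
  rw [pow_eq_pow_iff_modEq, hog] at hu
  exact (Nat.ModEq.mul_left_cancel' hm.ne' hu).eq_of_lt_of_lt hi hj

open scoped Classical in
lemma sum_chi_pow (hm : 0 < m) (χ : MulChar F ℂ) (hχ : orderOf χ = m) (w : F) :
    ∑ s ∈ Finset.range m, (χ ^ s) w = if w ∈ Hset F m then (m : ℂ) else 0 := by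
  by_cases hw : w = 0
  · subst hw
    have h0 : (0 : F) ∉ Hset F m := fun h => h.1 rfl
    rw [if_neg h0]
    refine Finset.sum_eq_zero fun s _ => ?_
    exact MulChar.map_nonunit _ not_isUnit_zero
  by_cases hwH : w ∈ Hset F m
  · rw [if_pos hwH]
    rw [Finset.sum_congr rfl fun s _ => chi_pow_on_Hset hm χ hχ s hwH]
    simp
  · rw [if_neg hwH]
    have hz1 : χ w ≠ 1 := fun h => hwH ((mem_Hset_iff hm χ hχ hw).mpr h)
    rw [Finset.sum_congr rfl fun s _ => chi_pow_apply χ s hw]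
    rw [geom_sum_eq hz1 m]
    have hzm : (χ w) ^ m = 1 := by
      have hχm : χ ^ m = 1 := by rw [← hχ]; exact pow_orderOf_eq_one χ
      rw [← chi_pow_apply χ m hw, hχm, MulChar.one_apply (isUnit_iff_ne_zero.mpr hw)]
    rw [hzm, sub_self, zero_div]

end Aux

theorem stmt0 (p m f l : ℕ) (hp : p.Prime) (hm : 0 < m) (hf : 0 < f)
    (F : Type*) [Field F] [Fintype F]
    (hq : ∃ n : ℕ, 0 < n ∧ Fintype.card F = p ^ n)
    (hcard : Fintype.card F = m * f + 1)
    (hlf : f - 1 = l * m)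
    (χ : MulChar F ℂ) (hχ : orderOf χ = m) :
    IsDiffSet (Hset F m) f l ↔
      ∀ s : ℕ, 1 ≤ s → s ≤ m - 1 →
        ∑ α ∈ (Set.toFinite (Hset F m)).toFinset, (χ ^ s) (1 - α) = 0 := by
  classical
  set Hf : Finset F := (Set.toFinite (Hset F m)).toFinset with hHf
  have hmemHf : ∀ x : F, x ∈ Hf ↔ x ∈ Hset F m := fun x => by
    rw [hHf]; exact Set.Finite.mem_toFinset _
  have hcardHf : Hf.card = f := Hfin_card hm hf hcard
  have hf0 : (f : ℂ) ≠ 0 := Nat.cast_ne_zero.mpr hf.ne'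
  have hm0 : (m : ℂ) ≠ 0 := Nat.cast_ne_zero.mpr hm.ne'
  set Nc : F → ℕ := fun a => ((Hf ×ˢ Hf).filter fun x => x.1 - x.2 = a).card with hNcdef
  -- relation between ncard and Nc
  have hNc : ∀ a : F,
      ({x : F × F | x.1 ∈ Hset F m ∧ x.2 ∈ Hset F m ∧ x.1 - x.2 = a}).ncard = Nc a := by
    intro a
    have hset : {x : F × F | x.1 ∈ Hset F m ∧ x.2 ∈ Hset F m ∧ x.1 - x.2 = a}
        = ↑((Hf ×ˢ Hf).filter fun x => x.1 - x.2 = a) := by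
      ext ⟨x, y⟩
      simp [hmemHf, and_assoc]
    rw [hset, Set.ncard_coe_finset]
  -- S s = f * (χ^s(-1) * T s)
  have hS : ∀ s : ℕ, ∑ x ∈ Hf, ∑ y ∈ Hf, (χ ^ s) (x - y)
      = (f : ℂ) * ((χ ^ s) (-1) * ∑ α ∈ Hf, (χ ^ s) (1 - α)) := by
    intro s
    rw [Finset.sum_comm]
    have hinner : ∀ y ∈ Hf, ∑ x ∈ Hf, (χ ^ s) (x - y)
        = (χ ^ s) (-1) * ∑ α ∈ Hf, (χ ^ s) (1 - α) := by
      intro y hy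
      have hyH : y ∈ Hset F m := (hmemHf y).mp hy
      have hy0 : y ≠ 0 := hyH.1
      rw [Finset.mul_sum]
      refine Finset.sum_nbij' (fun x => y⁻¹ * x) (fun β => y * β) ?_ ?_ ?_ ?_ ?_
      · intro x hx
        rw [hmemHf] at hx ⊢
        exact mul_mem_Hset (inv_mem_Hset hyH) hx
      · intro β hβ
        rw [hmemHf] at hβ ⊢
        exact mul_mem_Hset hyH hβ
      · intro x _
        simp [← mul_assoc, mul_inv_cancel₀ hy0]
      · intro β _
        simp [← mul_assoc, inv_mul_cancel₀ hy0]
      · intro x _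
        have hfact : x - y = (-1) * (1 - y⁻¹ * x) * y := by
          field_simp
          ring
        rw [hfact, map_mul, map_mul, chi_pow_on_Hset hm χ hχ s hyH, mul_one]
    rw [Finset.sum_congr rfl hinner, Finset.sum_const, hcardHf, nsmul_eq_mul]
  -- ∑_a χ^s(a) Nc(a) = S s
  have hSN : ∀ s : ℕ, ∑ a : F, (χ ^ s) a * (Nc a : ℂ)
      = ∑ x ∈ Hf, ∑ y ∈ Hf, (χ ^ s) (x - y) := by
    intro s
    rw [← Finset.sum_product']
    rw [← Finset.sum_fiberwise (Hf ×ˢ Hf) (fun p => p.1 - p.2) (fun p => (χ ^ s) (p.1 - p.2))]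
    refine Finset.sum_congr rfl fun a _ => ?_
    have hcongr : ∀ p ∈ (Hf ×ˢ Hf).filter fun p : F × F => p.1 - p.2 = a,
        (χ ^ s) (p.1 - p.2) = (χ ^ s) a := by
      intro p hp
      rw [(Finset.mem_filter.mp hp).2]
    rw [Finset.sum_congr rfl hcongr, Finset.sum_const, nsmul_eq_mul, mul_comm]
  -- coset invariance
  have hcoset : ∀ c ∈ Hset F m, ∀ a : F, Nc (a * c) = Nc a := by
    intro c hc a
    have hc0 : c ≠ 0 := hc.1
    refine (Finset.card_nbij' (fun p : F × F => (c⁻¹ * p.1, c⁻¹ * p.2))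
      (fun p : F × F => (c * p.1, c * p.2)) ?_ ?_ ?_ ?_)
    · rintro ⟨x, y⟩ hp
      simp only [Finset.mem_coe, Finset.mem_filter, Finset.mem_product, hmemHf] at hp ⊢
      obtain ⟨⟨hx, hy⟩, hxy⟩ := hp
      refine ⟨⟨mul_mem_Hset (inv_mem_Hset hc) hx, mul_mem_Hset (inv_mem_Hset hc) hy⟩, ?_⟩
      rw [← mul_sub, hxy, mul_comm a c, ← mul_assoc, inv_mul_cancel₀ hc0, one_mul]
    · rintro ⟨x, y⟩ hp
      simp only [Finset.mem_coe, Finset.mem_filter, Finset.mem_product, hmemHf] at hp ⊢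
      obtain ⟨⟨hx, hy⟩, hxy⟩ := hp
      refine ⟨⟨mul_mem_Hset hc hx, mul_mem_Hset hc hy⟩, ?_⟩
      rw [← mul_sub, hxy, mul_comm]
    · rintro ⟨x, y⟩ _
      simp [← mul_assoc, mul_inv_cancel₀ hc0]
    · rintro ⟨x, y⟩ _
      simp [← mul_assoc, inv_mul_cancel₀ hc0]
  -- the inversion formula
  have hInv : ∀ a : F, a ≠ 0 → (f : ℂ) * m * (Nc a : ℂ)
      = ∑ s ∈ Finset.range m, ((χ ^ s) a)⁻¹ * ∑ x ∈ Hf, ∑ y ∈ Hf, (χ ^ s) (x - y) := by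
    intro a ha
    have hinvap : ∀ s : ℕ, ∀ w : F, ((χ ^ s) a)⁻¹ * (χ ^ s) w = (χ ^ s) (a⁻¹ * w) := by
      intro s w
      rw [map_mul]
      congr 1
      rw [chi_pow_apply χ s ha, chi_pow_apply χ s (inv_ne_zero ha), ← inv_pow]
      congr 1
      have h1 : χ a⁻¹ * χ a = 1 := by
        rw [← map_mul, inv_mul_cancel₀ ha, map_one]
      exact (eq_inv_of_mul_eq_one_left h1).symm
    symm
    calc ∑ s ∈ Finset.range m, ((χ ^ s) a)⁻¹ * ∑ x ∈ Hf, ∑ y ∈ Hf, (χ ^ s) (x - y)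
        = ∑ s ∈ Finset.range m, ∑ x ∈ Hf, ∑ y ∈ Hf, (χ ^ s) (a⁻¹ * (x - y)) := by
          refine Finset.sum_congr rfl fun s _ => ?_
          rw [Finset.mul_sum]
          refine Finset.sum_congr rfl fun x _ => ?_
          rw [Finset.mul_sum]
          exact Finset.sum_congr rfl fun y _ => hinvap s (x - y)
      _ = ∑ x ∈ Hf, ∑ y ∈ Hf, ∑ s ∈ Finset.range m, (χ ^ s) (a⁻¹ * (x - y)) := by
          rw [Finset.sum_comm]
          exact Finset.sum_congr rfl fun x _ => Finset.sum_comm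
      _ = ∑ x ∈ Hf, ∑ y ∈ Hf, (if a⁻¹ * (x - y) ∈ Hset F m then (m : ℂ) else 0) :=
          Finset.sum_congr rfl fun x _ => Finset.sum_congr rfl fun y _ =>
            sum_chi_pow hm χ hχ _
      _ = (m : ℂ) * ((Hf ×ˢ Hf).filter fun p : F × F => a⁻¹ * (p.1 - p.2) ∈ Hset F m).card := by
          rw [← Finset.sum_product', Finset.sum_ite, Finset.sum_const, Finset.sum_const_zero,
            add_zero, nsmul_eq_mul, mul_comm]
      _ = (f : ℂ) * m * (Nc a : ℂ) := by
          have h1 : ((Hf ×ˢ Hf).filter fun p : F × F => a⁻¹ * (p.1 - p.2) ∈ Hset F m).card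
              = ∑ c ∈ Hf, Nc (a * c) := by
            have h2 := Finset.sum_card_fiberwise_eq_card_filter (Hf ×ˢ Hf) Hf
              (fun p : F × F => a⁻¹ * (p.1 - p.2))
            have h3 : ((Hf ×ˢ Hf).filter fun p : F × F => a⁻¹ * (p.1 - p.2) ∈ Hset F m)
                = ((Hf ×ˢ Hf).filter fun p : F × F => a⁻¹ * (p.1 - p.2) ∈ Hf) :=
              Finset.filter_congr fun p _ => (hmemHf _).symm
            rw [h3, ← h2]
            refine Finset.sum_congr rfl fun c _ => ?_
            have h4 : ((Hf ×ˢ Hf).filter fun p : F × F => a⁻¹ * (p.1 - p.2) = c)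
                = ((Hf ×ˢ Hf).filter fun p : F × F => p.1 - p.2 = a * c) :=
              Finset.filter_congr fun p _ => inv_mul_eq_iff_eq_mul₀ ha
            rw [h4]
          have h5 : ∑ c ∈ Hf, Nc (a * c) = f * Nc a := by
            rw [Finset.sum_congr rfl fun c hc => hcoset c ((hmemHf c).mp hc) a,
              Finset.sum_const, hcardHf, smul_eq_mul]
          rw [h1, h5]
          push_cast
          ring
  constructor
  · -- difference set → character sums vanish
    intro hD s hs1 hs2
    have hsm : s < m := lt_of_le_of_lt hs2 (Nat.sub_lt hm one_pos)
    have hnt : (χ ^ s) ≠ 1 := by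
      intro h
      have hdvd := orderOf_dvd_of_pow_eq_one h
      rw [hχ] at hdvd
      exact Nat.not_dvd_of_pos_of_lt hs1 hsm hdvd
    have hzero : ∑ a : F, (χ ^ s) a * (Nc a : ℂ) = 0 := by
      have hterm : ∀ a : F, (χ ^ s) a * (Nc a : ℂ) = (χ ^ s) a * (l : ℂ) := by
        intro a
        by_cases ha : a = 0
        · subst ha
          rw [MulChar.map_nonunit _ not_isUnit_zero, zero_mul, zero_mul]
        · rw [← hNc a, hD.2 a ha]
      rw [Finset.sum_congr rfl fun a _ => hterm a, ← Finset.sum_mul,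
        MulChar.sum_eq_zero_of_ne_one hnt, zero_mul]
    rw [hSN, hS] at hzero
    have hne : (χ ^ s) (-1 : F) ≠ 0 := by
      intro h
      have h11 : (χ ^ s) ((-1 : F) * (-1)) = 0 := by rw [map_mul, h, zero_mul]
      rw [neg_mul_neg, one_mul, map_one] at h11
      exact one_ne_zero h11
    rcases mul_eq_zero.mp hzero with h | h
    · exact absurd h hf0
    rcases mul_eq_zero.mp h with h' | h'
    · exact absurd h' hne
    · exact h'
  · -- character sums vanish → difference set
    intro hT
    constructor
    · have hn : (Hset F m).ncard = Hf.card := by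
        rw [hHf, Set.ncard_eq_toFinset_card]
      rw [hn, hcardHf]
    · intro a ha
      rw [hNc a]
      have h1Hf : (1 : F) ∈ Hf := (hmemHf 1).mpr ⟨one_ne_zero, 1, one_pow m⟩
      have hT0 : ∑ α ∈ Hf, (χ ^ (0 : ℕ)) (1 - α) = (f : ℂ) - 1 := by
        rw [pow_zero]
        have hterm : ∀ α ∈ Hf, (1 : MulChar F ℂ) (1 - α)
            = 1 - (if α = 1 then (1 : ℂ) else 0) := by
          intro α _
          by_cases h : α = 1
          · subst h
            rw [sub_self, if_pos rfl, MulChar.map_nonunit _ not_isUnit_zero]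
            norm_num
          · rw [if_neg h, sub_zero,
              MulChar.one_apply (isUnit_iff_ne_zero.mpr (sub_ne_zero.mpr (Ne.symm h)))]
        rw [Finset.sum_congr rfl hterm, Finset.sum_sub_distrib, Finset.sum_const, hcardHf,
          Finset.sum_ite_eq' Hf 1 (fun _ => (1 : ℂ)), if_pos h1Hf, nsmul_eq_mul, mul_one]
      have hvanish : ∀ s ∈ Finset.range m, s ≠ 0 →
          ((χ ^ s) a)⁻¹ * ∑ x ∈ Hf, ∑ y ∈ Hf, (χ ^ s) (x - y) = 0 := by
        intro s hsr hs0
        have hsm := Finset.mem_range.mp hsr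
        rw [hS s, hT s (Nat.one_le_iff_ne_zero.mpr hs0) (by omega), mul_zero, mul_zero, mul_zero]
      have key : (f : ℂ) * m * (Nc a : ℂ) = (f : ℂ) * m * (l : ℂ) := by
        rw [hInv a ha,
          Finset.sum_eq_single_of_mem 0 (Finset.mem_range.mpr hm) hvanish,
          hS 0, hT0, pow_zero, MulChar.one_apply (isUnit_iff_ne_zero.mpr ha), inv_one, one_mul,
          MulChar.one_apply (isUnit_iff_ne_zero.mpr (neg_ne_zero.mpr (one_ne_zero (α := F)))),
          one_mul]
        have hfl : (f : ℂ) - 1 = (l : ℂ) * m := by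
          have hfe : f = l * m + 1 := by omega
          rw [hfe]
          push_cast
          ring
        rw [hfl]
        ring
      have hcast := mul_left_cancel₀ (mul_ne_zero hf0 hm0) key
      exact_mod_cast hcast
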